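/- Fix 1 ≤ t < T and θ_t, θ_{t+1} ∈ ℝ^d. Suppose (x_t, y_t) is a global minimax point over 𝒳 × 𝒴 of (x, y) ↦ Σ_{n<t} L̄_n(x, y) − θ_t^⊤x, (x_{t+1}, y_{t+1}) is a global minimax point over 𝒳 × 𝒴 of (x, y) ↦ Σ_{n<t+1} L̄_n(x, y) − θ_{t+1}^⊤x, and y_t″ maximizes y ↦ Σ_{n<t} L̄_n(x_{t+1}, y) over 𝒴. Then Σ_{n<t+1} L̄_n(x_{t+1}, y_{t+1}) − θ_{t+1}^⊤x_{t+1} ≥ [Σ_{n<t} L̄_n(x_t, y_t) − θ_t^⊤x_t] + (θ_t − θ_{t+1})^⊤x_{t+1} + L̄_t(x_{t+1}, y_t″). -/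

import Mathlib

open Finset

/-- inequality (5) of the paper: under the FTDPL minimax hypotheses,
`Σ_{n<t+1} L̄ₙ(x_{t+1},y_{t+1}) − θ_{t+1}ᵀx_{t+1}
  ≥ [Σ_{n<t} L̄ₙ(x_t,y_t) − θ_tᵀx_t] + (θ_t − θ_{t+1})ᵀx_{t+1} + L̄_t(x_{t+1}, y_t″)`. -/
theorem stmt_7
    (d I T : ℕ) (hd : 0 < d) (hI : 0 < I) (hT : 0 < T)
    (𝒳 : Set (Fin d → ℝ)) (h𝒳ne : 𝒳.Nonempty) (h𝒳cp : IsCompact 𝒳)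
    (ymax : ℝ) (hymax : 0 < ymax)
    (𝒴 : Set (Fin I → ℝ)) (h𝒴 : 𝒴 = {y | ∀ i, y i ∈ Set.Icc (0 : ℝ) ymax})
    (G0 : ℝ) (hG0 : 0 < G0)
    (f : ℕ → (Fin d → ℝ) → ℝ)
    (c : Fin I → ℕ → (Fin d → ℝ) → ℝ)
    (b : Fin I → ℝ) (hb : ∀ i, 0 ≤ b i)
    (hf : ∀ t, 1 ≤ t → t ≤ T → ∀ x x' : Fin d → ℝ,
      |f t x - f t x'| ≤ G0 * ∑ j, |x j - x' j|)
    (hc : ∀ i t, 1 ≤ t → t ≤ T → ∀ x x' : Fin d → ℝ,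
      |c i t x - c i t x'| ≤ G0 * ∑ j, |x j - x' j|)
    (lam : ℝ) (hlam : 0 < lam)
    (L : ℕ → (Fin d → ℝ) → (Fin I → ℝ) → ℝ)
    (hL : ∀ t x y, L t x y = f t x + ∑ i, y i * (c i t x - b i))
    (Lbar : ℕ → (Fin d → ℝ) → (Fin I → ℝ) → ℝ)
    (hLbar : ∀ n x y, Lbar n x y
      = L n x y + (lam / (n : ℝ) ^ ((1 : ℝ) / 9)) * ∑ i, Real.log (y i + 1))
    (t : ℕ) (h1t : 1 ≤ t) (htT : t < T)
    (θt θt1 : Fin d → ℝ)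
    (xt : Fin d → ℝ) (yt : Fin I → ℝ) (hxt : xt ∈ 𝒳) (hyt : yt ∈ 𝒴)
    -- `(x_t, y_t)` is a global minimax point of `(x,y) ↦ Σ_{n<t} L̄ₙ(x,y) − θₜᵀx`
    (hmmt1 : ∀ y ∈ 𝒴,
      (∑ n ∈ Finset.Ico 1 t, Lbar n xt y) - ∑ j, θt j * xt j
        ≤ (∑ n ∈ Finset.Ico 1 t, Lbar n xt yt) - ∑ j, θt j * xt j)
    (hmmt2 : ∀ x ∈ 𝒳,
      (∑ n ∈ Finset.Ico 1 t, Lbar n xt yt) - ∑ j, θt j * xt j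
        ≤ sSup ((fun y' => (∑ n ∈ Finset.Ico 1 t, Lbar n x y') - ∑ j, θt j * x j) '' 𝒴))
    (xt1 : Fin d → ℝ) (yt1 : Fin I → ℝ) (hxt1 : xt1 ∈ 𝒳) (hyt1 : yt1 ∈ 𝒴)
    -- `(x_{t+1}, y_{t+1})` is a global minimax point of `(x,y) ↦ Σ_{n<t+1} L̄ₙ(x,y) − θ_{t+1}ᵀx`
    (hmmt1' : ∀ y ∈ 𝒴,
      (∑ n ∈ Finset.Ico 1 (t + 1), Lbar n xt1 y) - ∑ j, θt1 j * xt1 j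
        ≤ (∑ n ∈ Finset.Ico 1 (t + 1), Lbar n xt1 yt1) - ∑ j, θt1 j * xt1 j)
    (hmmt2' : ∀ x ∈ 𝒳,
      (∑ n ∈ Finset.Ico 1 (t + 1), Lbar n xt1 yt1) - ∑ j, θt1 j * xt1 j
        ≤ sSup ((fun y' => (∑ n ∈ Finset.Ico 1 (t + 1), Lbar n x y') - ∑ j, θt1 j * x j) '' 𝒴))
    -- `y_t″` maximizes `y ↦ Σ_{n<t} L̄ₙ(x_{t+1}, y)` over `𝒴`
    (yt'' : Fin I → ℝ) (hyt'' : yt'' ∈ 𝒴)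
    (hyt''max : ∀ y ∈ 𝒴, ∑ n ∈ Finset.Ico 1 t, Lbar n xt1 y
      ≤ ∑ n ∈ Finset.Ico 1 t, Lbar n xt1 yt'') :
    ((∑ n ∈ Finset.Ico 1 t, Lbar n xt yt) - ∑ j, θt j * xt j)
        + (∑ j, (θt j - θt1 j) * xt1 j) + Lbar t xt1 yt''
      ≤ (∑ n ∈ Finset.Ico 1 (t + 1), Lbar n xt1 yt1) - ∑ j, θt1 j * xt1 j := by
  have h1 : (∑ n ∈ Finset.Ico 1 t, Lbar n xt yt) - ∑ j, θt j * xt j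
      ≤ (∑ n ∈ Finset.Ico 1 t, Lbar n xt1 yt'') - ∑ j, θt j * xt1 j := by
    refine (hmmt2 xt1 hxt1).trans ?_
    refine csSup_le ⟨_, ⟨yt'', hyt'', rfl⟩⟩ ?_
    rintro _ ⟨y, hy, rfl⟩
    exact sub_le_sub_right (hyt''max y hy) _
  have h2 := hmmt1' yt'' hyt''
  have hsplit : ∀ y, ∑ n ∈ Finset.Ico 1 (t + 1), Lbar n xt1 y
      = (∑ n ∈ Finset.Ico 1 t, Lbar n xt1 y) + Lbar t xt1 y := fun y =>
    Finset.sum_Ico_succ_top h1t _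
  have hdist : (∑ j, (θt j - θt1 j) * xt1 j)
      = (∑ j, θt j * xt1 j) - ∑ j, θt1 j * xt1 j := by
    rw [← Finset.sum_sub_distrib]
    exact Finset.sum_congr rfl fun j _ => by ring
  rw [hsplit yt''] at h2
  calc ((∑ n ∈ Finset.Ico 1 t, Lbar n xt yt) - ∑ j, θt j * xt j)
        + (∑ j, (θt j - θt1 j) * xt1 j) + Lbar t xt1 yt''
      ≤ ((∑ n ∈ Finset.Ico 1 t, Lbar n xt1 yt'') - ∑ j, θt j * xt1 j)
        + (∑ j, (θt j - θt1 j) * xt1 j) + Lbar t xt1 yt'' := by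
        exact add_le_add_left (add_le_add_left h1 _) _
    _ = (∑ n ∈ Finset.Ico 1 t, Lbar n xt1 yt'') + Lbar t xt1 yt''
        - ∑ j, θt1 j * xt1 j := by rw [hdist]; ring
    _ ≤ _ := h2
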